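/- Define a translation ⟨·⟩_v from LTL_F+PM formulas to FO²_M[<] formulas with free variable v ∈ {x,y} (v̄ denoting the other variable) by: ⟨a⟩_v := a(v); ⟨¬φ⟩_v := ¬⟨φ⟩_v; ⟨φ ∧ φ'⟩_v := ⟨φ⟩_v ∧ ⟨φ'⟩_v; ⟨F φ⟩_v := ∃v̄ (v ≤ v̄ ∧ ⟨φ⟩_{v̄}); ⟨PM φ⟩_v := M v̄.((v̄ < v ∧ ⟨φ⟩_{v̄}) ∨ (v̄ ≥ v ∧ wht(v̄))). For an LTL_F+PM formula φ, let ⟨φ⟩ := ψ^FO_shadowy ∧ ∃x (first(x) ∧ ⟨φ⟩_x), where ψ^FO_shadowy is the FO²_M[<] sentence defining shadowy words and first(x) := ¬∃y y < x. Then an LTL_F+PM formula φ has a shadowy finite-word model if and only if the FO²_M[<] sentence ⟨φ⟩ has a finite-word model. -/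

import Mathlib

/- STATEMENT 19: The translation ⟨·⟩ from LTL_F+PM to FO²_M[<] preserves having a
shadowy model. -/

namespace Trans19

abbrev Word := List (Set ℕ)

/-- Formulas of LTL_F extended with the Past-Majority operator `PM`. -/
inductive PMFormula where
  | atom (a : ℕ)
  | neg (φ : PMFormula)
  | conj (φ ψ : PMFormula)
  | fut (φ : PMFormula)
  | pm (φ : PMFormula)

def PMSat (w : Word) : ℕ → PMFormula → Prop
  | i, .atom a => a ∈ w.getD i ∅
  | i, .neg φ => ¬ PMSat w i φ
  | i, .conj φ ψ => PMSat w i φ ∧ PMSat w i ψ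
  | i, .fut φ => ∃ j, i ≤ j ∧ j < w.length ∧ PMSat w j φ
  | i, .pm φ => 2 * Set.ncard {j | j < i ∧ PMSat w j φ} ≥ i

/-- The two variables x, y. -/
inductive Var where
  | x | y
deriving DecidableEq

/-- The other variable. -/
def Var.other : Var → Var
  | .x => .y
  | .y => .x

/-- Formulas of FO²_M[<]. -/
inductive FO2 where
  | atom (a : ℕ) (v : Var)
  | lt (v v' : Var)
  | eq (v v' : Var)
  | neg (φ : FO2)
  | conj (φ ψ : FO2)
  | ex (v : Var) (φ : FO2)
  | all (v : Var) (φ : FO2)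
  | maj (v : Var) (φ : FO2)

def FSat (w : Word) : (Var → ℕ) → FO2 → Prop
  | ρ, .atom a v => a ∈ w.getD (ρ v) ∅
  | ρ, .lt v v' => ρ v < ρ v'
  | ρ, .eq v v' => ρ v = ρ v'
  | ρ, .neg φ => ¬ FSat w ρ φ
  | ρ, .conj φ ψ => FSat w ρ φ ∧ FSat w ρ ψ
  | ρ, .ex v φ => ∃ p, p < w.length ∧ FSat w (Function.update ρ v p) φ
  | ρ, .all v φ => ∀ p, p < w.length → FSat w (Function.update ρ v p) φ
  | ρ, .maj v φ => 2 * Set.ncard {p | p < w.length ∧ FSat w (Function.update ρ v p) φ} ≥ w.length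

def fdisj (φ ψ : FO2) : FO2 := .neg (.conj (.neg φ) (.neg ψ))
def fimpl (φ ψ : FO2) : FO2 := fdisj (.neg φ) ψ

/-- `Half v. φ := M v. φ ∧ M v. ¬φ`. -/
def halfQ (v : Var) (φ : FO2) : FO2 := .conj (.maj v φ) (.maj v (.neg φ))

/-- `first(v) := ¬∃ v̄. v̄ < v`. -/
def firstF (v : Var) : FO2 := .neg (.ex v.other (.lt v.other v))

/-- The translation `⟨φ⟩_v` from LTL_F+PM to FO²_M[<], parametrised by wht. -/
def tr (wht : ℕ) : Var → PMFormula → FO2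
  | v, .atom a => .atom a v
  | v, .neg φ => .neg (tr wht v φ)
  | v, .conj φ ψ => .conj (tr wht v φ) (tr wht v ψ)
  | v, .fut φ => .ex v.other (.conj (fdisj (.lt v v.other) (.eq v v.other)) (tr wht v.other φ))
  | v, .pm φ => .maj v.other
      (fdisj (.conj (.lt v.other v) (tr wht v.other φ))
             (.conj (fdisj (.lt v v.other) (.eq v v.other)) (.atom wht v.other)))

/-- `udistr_{wht,shdw}`: each position carries exactly one of wht, shdw. -/
def udistr (wht shdw : ℕ) : FO2 :=
  .all .x (.conj (fdisj (.atom wht .x) (.atom shdw .x))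
                 (fdisj (.neg (.atom wht .x)) (.neg (.atom shdw .x))))

def φforbidWW (wht shdw : ℕ) : FO2 :=
  fimpl (.atom wht .x)
    (halfQ .y (fdisj (.conj (.lt .y .x) (.atom wht .y))
                     (.conj (.lt .x .y) (.atom shdw .y))))

def φforbidSS (wht shdw : ℕ) : FO2 :=
  fimpl (.atom shdw .x)
    (halfQ .y (fdisj (.conj (fdisj (.lt .y .x) (.eq .x .y)) (.atom shdw .y))
                     (.conj (.lt .x .y) (.atom wht .y))))

/-- `ψ^FO_shadowy`, the FO²_M[<] sentence defining shadowy words. -/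
def ψFOshadowy (wht shdw : ℕ) : FO2 :=
  .conj (.conj (udistr wht shdw)
          (.conj (.ex .x (.conj (firstF .x) (.atom wht .x)))
            (.conj (halfQ .x (.atom wht .x)) (halfQ .x (.atom shdw .x)))))
        (.all .x (.conj (φforbidWW wht shdw) (φforbidSS wht shdw)))

/-- `⟨φ⟩ := ψ^FO_shadowy ∧ ∃x (first(x) ∧ ⟨φ⟩_x)`. -/
def trSentence (wht shdw : ℕ) (φ : PMFormula) : FO2 :=
  .conj (ψFOshadowy wht shdw) (.ex .x (.conj (firstF .x) (tr wht .x φ)))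

def Shadowy (wht shdw : ℕ) (w : Word) : Prop :=
  Even w.length ∧
  (∀ j < w.length, Even j → wht ∈ w.getD j ∅ ∧ shdw ∉ w.getD j ∅) ∧
  (∀ j < w.length, Odd j → shdw ∈ w.getD j ∅ ∧ wht ∉ w.getD j ∅)


open scoped Classical in
noncomputable def cnt (L : ℕ) (P : ℕ → Prop) : ℕ := ((Finset.range L).filter P).card

lemma cnt_eq (L : ℕ) (P : ℕ → Prop) [DecidablePred P] :
    cnt L P = ((Finset.range L).filter P).card := by
  unfold cnt; congr!

lemma cnt_congr {L : ℕ} {P Q : ℕ → Prop} (h : ∀ p < L, (P p ↔ Q p)) : cnt L P = cnt L Q := by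
  classical
  rw [cnt_eq, cnt_eq]
  congr 1
  apply Finset.filter_congr
  intro p hp
  exact h p (by simpa using hp)

lemma cnt_zero (P : ℕ → Prop) : cnt 0 P = 0 := by
  classical
  rw [cnt_eq]; simp

lemma cnt_add_not (L : ℕ) (P : ℕ → Prop) : cnt L P + cnt L (fun p => ¬ P p) = L := by
  classical
  rw [cnt_eq, cnt_eq]
  rw [Finset.card_filter_add_card_filter_not, Finset.card_range]

lemma cnt_or {L : ℕ} {P Q : ℕ → Prop} (h : ∀ p, ¬(P p ∧ Q p)) :
    cnt L (fun p => P p ∨ Q p) = cnt L P + cnt L Q := by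
  classical
  rw [cnt_eq, cnt_eq, cnt_eq]
  have he : (Finset.range L).filter (fun p => P p ∨ Q p)
      = (Finset.range L).filter P ∪ (Finset.range L).filter Q := by
    ext p
    simp only [Finset.mem_filter, Finset.mem_union, Finset.mem_range]
    tauto
  rw [he, Finset.card_union_of_disjoint]
  rw [Finset.disjoint_left]
  intro a ha hb
  simp only [Finset.mem_filter] at ha hb
  exact h a ⟨ha.2, hb.2⟩

lemma cnt_lt {L i : ℕ} (h : i ≤ L) (P : ℕ → Prop) :
    cnt L (fun p => p < i ∧ P p) = cnt i P := by
  classical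
  rw [cnt_eq, cnt_eq]
  congr 1
  ext p
  simp only [Finset.mem_filter, Finset.mem_range]
  constructor
  · rintro ⟨_, hp, hP⟩; exact ⟨hp, hP⟩
  · rintro ⟨hp, hP⟩; exact ⟨lt_of_lt_of_le hp h, hp, hP⟩

lemma cnt_ge {L i : ℕ} (h : i ≤ L) (P : ℕ → Prop) :
    cnt L (fun p => i ≤ p ∧ P p) + cnt i P = cnt L P := by
  rw [← cnt_lt h P, ← cnt_or (L := L) (P := fun p => i ≤ p ∧ P p)
    (Q := fun p => p < i ∧ P p) (fun p hp => by omega)]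
  apply cnt_congr
  intro p _
  constructor
  · rintro (⟨_, hP⟩ | ⟨_, hP⟩) <;> exact hP
  · intro hP
    by_cases hc : i ≤ p
    · exact Or.inl ⟨hc, hP⟩
    · exact Or.inr ⟨by omega, hP⟩

lemma cnt_succ_of {i : ℕ} {P : ℕ → Prop} (h : P i) : cnt (i+1) P = cnt i P + 1 := by
  classical
  rw [cnt_eq, cnt_eq]
  rw [Finset.range_add_one, Finset.filter_insert, if_pos h,
    Finset.card_insert_of_notMem (by simp)]

lemma cnt_succ_not {i : ℕ} {P : ℕ → Prop} (h : ¬ P i) : cnt (i+1) P = cnt i P := by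
  classical
  rw [cnt_eq, cnt_eq]
  rw [Finset.range_add_one, Finset.filter_insert, if_neg h]

lemma cnt_even (L : ℕ) : cnt L (fun p => Even p) = (L+1)/2 := by
  induction L with
  | zero => simp [cnt_zero]
  | succ n ih =>
    rcases Nat.even_or_odd n with h | h
    · rw [cnt_succ_of h, ih]; rcases h with ⟨k, hk⟩; omega
    · rw [cnt_succ_not (Nat.not_even_iff_odd.mpr h), ih]
      rcases h with ⟨k, hk⟩; omega

lemma cnt_odd (L : ℕ) : cnt L (fun p => Odd p) = L/2 := by
  have h1 := cnt_add_not L (fun p => Even p)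
  have h2 : cnt L (fun p => Odd p) = cnt L (fun p => ¬ Even p) :=
    cnt_congr (fun p _ => by rw [Nat.not_even_iff_odd])
  have h3 := cnt_even L
  omega

lemma cnt_le (L : ℕ) (P : ℕ → Prop) : cnt L P ≤ L := by
  classical
  rw [cnt_eq]
  calc ((Finset.range L).filter P).card ≤ (Finset.range L).card := Finset.card_filter_le _ _
  _ = L := Finset.card_range L

lemma ncard_cnt (L : ℕ) (P : ℕ → Prop) : {p | p < L ∧ P p}.ncard = cnt L P := by
  classical
  rw [cnt_eq]
  rw [← Set.ncard_coe_finset]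
  congr 1
  ext p
  simp only [Finset.coe_filter, Finset.mem_range, Set.mem_setOf_eq]


/-! ### Basic facts about variables and environments -/

lemma other_ne (v : Var) : v.other ≠ v := by cases v <;> simp [Var.other]

@[simp] lemma update_self (ρ : Var → ℕ) (v : Var) (p : ℕ) :
    Function.update ρ v p v = p := Function.update_self v p ρ

@[simp] lemma update_other (ρ : Var → ℕ) (v : Var) (p : ℕ) :
    Function.update ρ v.other p v = ρ v :=
  Function.update_of_ne (Ne.symm (other_ne v)) p ρ

@[simp] lemma update_yx (ρ : Var → ℕ) (p : ℕ) :
    Function.update ρ Var.y p Var.x = ρ Var.x :=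
  Function.update_of_ne (by decide) p ρ

@[simp] lemma update_xy (ρ : Var → ℕ) (p : ℕ) :
    Function.update ρ Var.x p Var.y = ρ Var.y :=
  Function.update_of_ne (by decide) p ρ

/-! ### Semantics of derived connectives -/

lemma fsat_fdisj {w : Word} {ρ : Var → ℕ} {a b : FO2} :
    FSat w ρ (fdisj a b) ↔ (FSat w ρ a ∨ FSat w ρ b) := by
  show ¬(¬ FSat w ρ a ∧ ¬ FSat w ρ b) ↔ _
  tauto

lemma fsat_fimpl {w : Word} {ρ : Var → ℕ} {a b : FO2} :
    FSat w ρ (fimpl a b) ↔ (FSat w ρ a → FSat w ρ b) := by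
  show FSat w ρ (fdisj (.neg a) b) ↔ _
  rw [fsat_fdisj]
  show (¬ FSat w ρ a ∨ FSat w ρ b) ↔ _
  tauto

lemma fsat_maj {w : Word} {ρ : Var → ℕ} {v : Var} {φ : FO2} :
    FSat w ρ (.maj v φ) ↔
      2 * cnt w.length (fun p => FSat w (Function.update ρ v p) φ) ≥ w.length := by
  show 2 * Set.ncard {p | p < w.length ∧ FSat w (Function.update ρ v p) φ} ≥ w.length ↔ _
  rw [ncard_cnt]

lemma fsat_half {w : Word} {ρ : Var → ℕ} {v : Var} {φ : FO2} :
    FSat w ρ (halfQ v φ) ↔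
      2 * cnt w.length (fun p => FSat w (Function.update ρ v p) φ) = w.length := by
  have h1 : FSat w ρ (halfQ v φ) ↔ FSat w ρ (.maj v φ) ∧ FSat w ρ (.maj v (.neg φ)) := Iff.rfl
  rw [h1, fsat_maj, fsat_maj]
  have h2 : cnt w.length (fun p => FSat w (Function.update ρ v p) (.neg φ))
      = cnt w.length (fun p => ¬ FSat w (Function.update ρ v p) φ) :=
    cnt_congr (fun p _ => Iff.rfl)
  rw [h2]
  have h3 := cnt_add_not w.length (fun p => FSat w (Function.update ρ v p) φ)
  omega

/-! ### Shadowy words -/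

lemma shadowy_wht {wht shdw : ℕ} {w : Word} (hs : Shadowy wht shdw w) {p : ℕ}
    (hp : p < w.length) : wht ∈ w.getD p ∅ ↔ Even p := by
  rcases Nat.even_or_odd p with h | h
  · exact ⟨fun _ => h, fun _ => (hs.2.1 p hp h).1⟩
  · constructor
    · intro hmem; exact absurd hmem (hs.2.2 p hp h).2
    · intro he; exact absurd he (Nat.not_even_iff_odd.mpr h)

lemma shadowy_shdw {wht shdw : ℕ} {w : Word} (hs : Shadowy wht shdw w) {p : ℕ}
    (hp : p < w.length) : shdw ∈ w.getD p ∅ ↔ Odd p := by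
  rcases Nat.even_or_odd p with h | h
  · constructor
    · intro hmem; exact absurd hmem (hs.2.1 p hp h).2
    · intro ho; exact absurd h (Nat.not_even_iff_odd.mpr ho)
  · exact ⟨fun _ => h, fun _ => (hs.2.2 p hp h).1⟩

/-! ### Correctness of the formula translation on shadowy words -/

lemma tr_correct {wht shdw : ℕ} {w : Word} (hs : Shadowy wht shdw w)
    (φ : PMFormula) : ∀ (v : Var) (ρ : Var → ℕ), ρ v < w.length →
    (FSat w ρ (tr wht v φ) ↔ PMSat w (ρ v) φ) := by
  induction φ with
  | atom a =>
    intro v ρ _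
    exact Iff.rfl
  | neg φ ih =>
    intro v ρ h
    show ¬ FSat w ρ (tr wht v φ) ↔ ¬ PMSat w (ρ v) φ
    rw [ih v ρ h]
  | conj φ ψ ihφ ihψ =>
    intro v ρ h
    show (FSat w ρ (tr wht v φ) ∧ FSat w ρ (tr wht v ψ)) ↔ _
    rw [ihφ v ρ h, ihψ v ρ h]
    exact Iff.rfl
  | fut φ ih =>
    intro v ρ h
    show (∃ p, p < w.length ∧ FSat w (Function.update ρ v.other p)
        (.conj (fdisj (.lt v v.other) (.eq v v.other)) (tr wht v.other φ))) ↔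
      (∃ j, ρ v ≤ j ∧ j < w.length ∧ PMSat w j φ)
    constructor
    · rintro ⟨p, hp, hc⟩
      obtain ⟨hd, htr⟩ := hc
      rw [fsat_fdisj] at hd
      have hd' : ρ v ≤ p := by
        rcases hd with h1 | h1
        · have : Function.update ρ v.other p v < Function.update ρ v.other p v.other := h1
          simp at this; omega
        · have : Function.update ρ v.other p v = Function.update ρ v.other p v.other := h1
          simp at this; omega
      refine ⟨p, hd', hp, ?_⟩
      have := (ih v.other (Function.update ρ v.other p) (by simpa using hp)).1 htr
      simpa using this
    · rintro ⟨j, hj1, hj2, hpm⟩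
      refine ⟨j, hj2, ?_, ?_⟩
      · rw [fsat_fdisj]
        rcases lt_or_eq_of_le hj1 with h1 | h1
        · left; show Function.update ρ v.other j v < Function.update ρ v.other j v.other
          simpa using h1
        · right; show Function.update ρ v.other j v = Function.update ρ v.other j v.other
          simpa using h1
      · apply (ih v.other (Function.update ρ v.other j) (by simpa using hj2)).2
        simpa using hpm
  | pm φ ih =>
    intro v ρ h
    show FSat w ρ (.maj v.other _) ↔ (2 * Set.ncard {j | j < ρ v ∧ PMSat w j φ} ≥ ρ v)
    rw [fsat_maj, ncard_cnt]
    have hc : cnt w.length (fun p => FSat w (Function.update ρ v.other p)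
          (fdisj (.conj (.lt v.other v) (tr wht v.other φ))
             (.conj (fdisj (.lt v v.other) (.eq v v.other)) (.atom wht v.other))))
        = cnt w.length (fun p => (p < ρ v ∧ PMSat w p φ) ∨ (ρ v ≤ p ∧ Even p)) := by
      apply cnt_congr
      intro p hp
      rw [fsat_fdisj]
      have e1 : FSat w (Function.update ρ v.other p) (.conj (.lt v.other v) (tr wht v.other φ))
          ↔ (p < ρ v ∧ PMSat w p φ) := by
        show (Function.update ρ v.other p v.other < Function.update ρ v.other p v ∧ _) ↔ _
        rw [ih v.other (Function.update ρ v.other p) (by simpa using hp)]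
        simp
      have e2 : FSat w (Function.update ρ v.other p)
          (.conj (fdisj (.lt v v.other) (.eq v v.other)) (.atom wht v.other))
          ↔ (ρ v ≤ p ∧ Even p) := by
        show (FSat w (Function.update ρ v.other p) (fdisj (.lt v v.other) (.eq v v.other))
            ∧ wht ∈ w.getD (Function.update ρ v.other p v.other) ∅) ↔ _
        rw [fsat_fdisj]
        show ((Function.update ρ v.other p v < Function.update ρ v.other p v.other
            ∨ Function.update ρ v.other p v = Function.update ρ v.other p v.other) ∧ _) ↔ _
        simp only [update_other, update_self]
        rw [shadowy_wht hs hp]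
        constructor
        · rintro ⟨h1, h2⟩; exact ⟨by omega, h2⟩
        · rintro ⟨h1, h2⟩; exact ⟨by omega, h2⟩
      rw [e1, e2]
    rw [hc]
    have hdis : ∀ p, ¬((p < ρ v ∧ PMSat w p φ) ∧ (ρ v ≤ p ∧ Even p)) := by
      rintro p ⟨⟨h1, _⟩, ⟨h2, _⟩⟩; omega
    rw [cnt_or hdis, cnt_lt (le_of_lt h) (fun p => PMSat w p φ)]
    have hge := cnt_ge (L := w.length) (i := ρ v) (le_of_lt h) (fun p => Even p)
    have he1 := cnt_even w.length
    have he2 := cnt_even (ρ v)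
    obtain ⟨k, hk⟩ := hs.1
    have h2A : 2 * cnt (ρ v) (fun p => PMSat w p φ) = 2 * cnt (ρ v) (fun p => PMSat w p φ) := rfl
    omega

/-! ### ψFOshadowy characterises shadowy words -/

lemma psi_sound {wht shdw : ℕ} {w : Word} {ρ : Var → ℕ}
    (h : FSat w ρ (ψFOshadowy wht shdw)) : Shadowy wht shdw w := by
  set L := w.length with hL
  set W : ℕ → Prop := fun p => wht ∈ w.getD p ∅ with hWdef
  set S : ℕ → Prop := fun p => shdw ∈ w.getD p ∅ with hSdef
  have h1 : FSat w ρ (udistr wht shdw) := h.1.1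
  have h3 : FSat w ρ (halfQ .x (.atom wht .x)) := h.1.2.2.1
  have h4 : FSat w ρ (halfQ .x (.atom shdw .x)) := h.1.2.2.2
  have h5 : FSat w ρ (.all .x (.conj (φforbidWW wht shdw) (φforbidSS wht shdw))) := h.2
  -- partition
  have hpart : ∀ p < L, (W p ∨ S p) ∧ ¬(W p ∧ S p) := by
    intro p hp
    have hh := h1 p hp
    have ha : FSat w (Function.update ρ .x p) (fdisj (.atom wht .x) (.atom shdw .x)) := hh.1
    have hb : FSat w (Function.update ρ .x p)
        (fdisj (.neg (.atom wht .x)) (.neg (.atom shdw .x))) := hh.2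
    rw [fsat_fdisj] at ha hb
    simp only [FSat, update_self] at ha hb
    constructor
    · exact ha
    · rintro ⟨hw, hsd⟩
      rcases hb with hb | hb
      · exact hb hw
      · exact hb hsd
  -- half counts
  have hWc : 2 * cnt L W = L := by
    have := fsat_half.1 h3
    rwa [cnt_congr (fun p _ => Iff.rfl : ∀ p < L,
      (FSat w (Function.update ρ .x p) (.atom wht .x) ↔ W p))] at this
  have hSc : 2 * cnt L S = L := by
    have := fsat_half.1 h4
    rwa [cnt_congr (fun p _ => Iff.rfl : ∀ p < L,
      (FSat w (Function.update ρ .x p) (.atom shdw .x) ↔ S p))] at this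
  -- forbidden patterns
  have hWW : ∀ p < L, W p → 2 * cnt L (fun q => (q < p ∧ W q) ∨ (p < q ∧ S q)) = L := by
    intro p hp hWp
    have := (h5 p hp).1
    rw [φforbidWW, fsat_fimpl] at this
    have := this (by simpa [FSat, hWdef] using hWp)
    rw [fsat_half] at this
    rwa [cnt_congr (fun q hq => ?_)] at this
    rw [fsat_fdisj]
    constructor
    · rintro (⟨ha, hb⟩ | ⟨ha, hb⟩)
      · left; exact ⟨by simpa [FSat] using ha, by simpa [FSat, hWdef, hSdef] using hb⟩
      · right; exact ⟨by simpa [FSat] using ha, by simpa [FSat, hWdef, hSdef] using hb⟩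
    · rintro (⟨ha, hb⟩ | ⟨ha, hb⟩)
      · left; exact ⟨by simpa [FSat] using ha, by simpa [FSat, hWdef, hSdef] using hb⟩
      · right; exact ⟨by simpa [FSat] using ha, by simpa [FSat, hWdef, hSdef] using hb⟩
  have hSS : ∀ p < L, S p → 2 * cnt L (fun q => (q ≤ p ∧ S q) ∨ (p < q ∧ W q)) = L := by
    intro p hp hSp
    have := (h5 p hp).2
    rw [φforbidSS, fsat_fimpl] at this
    have := this (by simpa [FSat, hSdef] using hSp)
    rw [fsat_half] at this
    rwa [cnt_congr (fun q hq => ?_)] at this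
    rw [fsat_fdisj]
    have e1 : FSat w (Function.update (Function.update ρ .x p) .y q)
        (.conj (fdisj (.lt .y .x) (.eq .x .y)) (.atom shdw .y)) ↔ (q ≤ p ∧ S q) := by
      show (FSat _ _ (fdisj (.lt .y .x) (.eq .x .y)) ∧ _) ↔ _
      rw [fsat_fdisj]
      show ((Function.update (Function.update ρ .x p) .y q .y
            < Function.update (Function.update ρ .x p) .y q .x
          ∨ Function.update (Function.update ρ .x p) .y q .x
            = Function.update (Function.update ρ .x p) .y q .y) ∧
          shdw ∈ w.getD (Function.update (Function.update ρ .x p) .y q .y) ∅) ↔ _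
      simp only [update_self, update_yx, update_xy]
      constructor
      · rintro ⟨ha, hb⟩; exact ⟨by omega, hb⟩
      · rintro ⟨ha, hb⟩; refine ⟨by omega, hb⟩
    have e2 : FSat w (Function.update (Function.update ρ .x p) .y q)
        (.conj (.lt .x .y) (.atom wht .y)) ↔ (p < q ∧ W q) := by
      show (Function.update (Function.update ρ .x p) .y q .x
            < Function.update (Function.update ρ .x p) .y q .y ∧
          wht ∈ w.getD (Function.update (Function.update ρ .x p) .y q .y) ∅) ↔ _
      simp only [update_self, update_yx, update_xy]
      exact Iff.rfl
    rw [e1, e2]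
  -- partition counting
  have hps : ∀ m, m ≤ L → cnt m W + cnt m S = m := by
    intro m hm
    have h1' := cnt_add_not m W
    have h2' : cnt m S = cnt m (fun p => ¬ W p) := by
      apply cnt_congr
      intro q hq
      have := hpart q (by omega)
      tauto
    omega
  -- key equations
  have hkeyW : ∀ p < L, W p → 2 * cnt p W = p := by
    intro p hp hWp
    have hmain := hWW p hp hWp
    have hdis : ∀ q, ¬((q < p ∧ W q) ∧ (p < q ∧ S q)) := by rintro q ⟨⟨a, _⟩, ⟨b, _⟩⟩; omega
    rw [cnt_or hdis, cnt_lt (le_of_lt hp) W] at hmain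
    have hcongr : cnt L (fun q => p < q ∧ S q) = cnt L (fun q => p + 1 ≤ q ∧ S q) :=
      cnt_congr (fun q _ => by constructor <;> rintro ⟨h', hx⟩ <;> exact ⟨by omega, hx⟩)
    have hge := cnt_ge (L := L) (i := p + 1) (by omega) S
    have hsucc := cnt_succ_of (P := W) hWp
    have hp1 := hps (p + 1) (by omega)
    omega
  have hkeyS : ∀ p < L, S p → 2 * cnt p W = p + 1 := by
    intro p hp hSp
    have hnW : ¬ W p := fun hw => (hpart p hp).2 ⟨hw, hSp⟩
    have hmain := hSS p hp hSp
    have hdis : ∀ q, ¬((q ≤ p ∧ S q) ∧ (p < q ∧ W q)) := by rintro q ⟨⟨a, _⟩, ⟨b, _⟩⟩; omega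
    rw [cnt_or hdis] at hmain
    have hcongr : cnt L (fun q => q ≤ p ∧ S q) = cnt L (fun q => q < p + 1 ∧ S q) :=
      cnt_congr (fun q _ => by constructor <;> rintro ⟨h', hx⟩ <;> exact ⟨by omega, hx⟩)
    rw [hcongr, cnt_lt (by omega) S] at hmain
    have hcongr2 : cnt L (fun q => p < q ∧ W q) = cnt L (fun q => p + 1 ≤ q ∧ W q) :=
      cnt_congr (fun q _ => by constructor <;> rintro ⟨h', hx⟩ <;> exact ⟨by omega, hx⟩)
    have hge := cnt_ge (L := L) (i := p + 1) (by omega) W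
    have hsucc := cnt_succ_not (P := W) hnW
    have hp1 := hps (p + 1) (by omega)
    omega
  -- alternation
  have heven : ∀ p, p < L → (W p ↔ Even p) := by
    intro p
    induction p using Nat.strong_induction_on with
    | _ p ih =>
      intro hp
      have hWcp : cnt p W = (p + 1) / 2 := by
        rw [cnt_congr (fun q hq => ih q hq (by omega))]
        exact cnt_even p
      rcases (hpart p hp).1 with hw | hs'
      · have hk := hkeyW p hp hw
        constructor
        · intro _; rw [Nat.even_iff]; omega
        · intro _; exact hw
      · have hk := hkeyS p hp hs'
        have hnw : ¬ W p := fun hw => (hpart p hp).2 ⟨hw, hs'⟩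
        constructor
        · intro hw; exact absurd hw hnw
        · intro he; exfalso; rw [Nat.even_iff] at he; omega
  refine ⟨⟨cnt L W, by omega⟩, ?_, ?_⟩
  · intro j hj hje
    have hw : W j := (heven j hj).2 hje
    exact ⟨hw, fun hsd => (hpart j hj).2 ⟨hw, hsd⟩⟩
  · intro j hj hjo
    have hnw : ¬ W j := fun hw => (Nat.not_even_iff_odd.mpr hjo) ((heven j hj).1 hw)
    have hsd : S j := by rcases (hpart j hj).1 with h' | h' <;> tauto
    exact ⟨hsd, hnw⟩

lemma psi_complete {wht shdw : ℕ} {w : Word} (hs : Shadowy wht shdw w) (hw : w ≠ [])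
    (ρ : Var → ℕ) : FSat w ρ (ψFOshadowy wht shdw) := by
  set L := w.length with hL
  have hL0 : 0 < L := by
    rw [hL]; exact List.length_pos_iff.mpr hw
  obtain ⟨k, hk⟩ := hs.1
  refine ⟨⟨?_, ?_, ?_, ?_⟩, ?_⟩
  · -- udistr
    intro p hp
    refine ⟨?_, ?_⟩
    · rw [fsat_fdisj]
      rcases Nat.even_or_odd p with hpar | hpar
      · left
        show wht ∈ w.getD (Function.update ρ .x p .x) ∅
        simpa using (hs.2.1 p hp hpar).1
      · right
        show shdw ∈ w.getD (Function.update ρ .x p .x) ∅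
        simpa using (hs.2.2 p hp hpar).1
    · rw [fsat_fdisj]
      rcases Nat.even_or_odd p with hpar | hpar
      · right
        show ¬ shdw ∈ w.getD (Function.update ρ .x p .x) ∅
        simpa using (hs.2.1 p hp hpar).2
      · left
        show ¬ wht ∈ w.getD (Function.update ρ .x p .x) ∅
        simpa using (hs.2.2 p hp hpar).2
  · -- first position is white
    refine ⟨0, hL0, ?_, ?_⟩
    · intro hc
      obtain ⟨q, _, hlt⟩ := hc
      have h0 : (Function.update (Function.update ρ Var.x 0) Var.y q) Var.y
          < (Function.update (Function.update ρ Var.x 0) Var.y q) Var.x := hlt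
      simp at h0
    · show wht ∈ w.getD (Function.update ρ .x 0 .x) ∅
      simpa using (hs.2.1 0 hL0 ⟨0, rfl⟩).1
  · -- half white
    rw [fsat_half]
    have hc : cnt L (fun p => FSat w (Function.update ρ .x p) (.atom wht .x))
        = cnt L (fun p => Even p) := by
      apply cnt_congr
      intro p hp
      show wht ∈ w.getD (Function.update ρ .x p .x) ∅ ↔ _
      rw [update_self]
      exact shadowy_wht hs hp
    rw [hc, cnt_even]
    omega
  · -- half shadow
    rw [fsat_half]
    have hc : cnt L (fun p => FSat w (Function.update ρ .x p) (.atom shdw .x))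
        = cnt L (fun p => Odd p) := by
      apply cnt_congr
      intro p hp
      show shdw ∈ w.getD (Function.update ρ .x p .x) ∅ ↔ _
      rw [update_self]
      exact shadowy_shdw hs hp
    rw [hc, cnt_odd]
    omega
  · -- forbidden patterns
    intro p hp
    refine ⟨?_, ?_⟩
    · rw [φforbidWW, fsat_fimpl]
      intro hWp
      have hWp' : wht ∈ w.getD p ∅ := by
        have h' : wht ∈ w.getD (Function.update ρ .x p .x) ∅ := hWp
        simpa using h'
      have hpe : Even p := (shadowy_wht hs hp).1 hWp'
      rw [fsat_half]
      have hc : cnt L (fun q => FSat w (Function.update (Function.update ρ .x p) .y q)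
            (fdisj (.conj (.lt .y .x) (.atom wht .y)) (.conj (.lt .x .y) (.atom shdw .y))))
          = cnt L (fun q => (q < p ∧ Even q) ∨ (p < q ∧ Odd q)) := by
        apply cnt_congr
        intro q hq
        rw [fsat_fdisj]
        have e1 : FSat w (Function.update (Function.update ρ .x p) .y q)
            (.conj (.lt .y .x) (.atom wht .y)) ↔ (q < p ∧ Even q) := by
          show (Function.update (Function.update ρ .x p) .y q .y
              < Function.update (Function.update ρ .x p) .y q .x
              ∧ wht ∈ w.getD (Function.update (Function.update ρ .x p) .y q .y) ∅) ↔ _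
          simp only [update_self, update_yx]
          rw [shadowy_wht hs hq]
        have e2 : FSat w (Function.update (Function.update ρ .x p) .y q)
            (.conj (.lt .x .y) (.atom shdw .y)) ↔ (p < q ∧ Odd q) := by
          show (Function.update (Function.update ρ .x p) .y q .x
              < Function.update (Function.update ρ .x p) .y q .y
              ∧ shdw ∈ w.getD (Function.update (Function.update ρ .x p) .y q .y) ∅) ↔ _
          simp only [update_self, update_yx]
          rw [shadowy_shdw hs hq]
        rw [e1, e2]
      rw [hc]
      have hdis : ∀ q, ¬((q < p ∧ Even q) ∧ (p < q ∧ Odd q)) := by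
        rintro q ⟨⟨a, _⟩, ⟨b, _⟩⟩; omega
      rw [cnt_or hdis, cnt_lt (le_of_lt hp) (fun q => Even q)]
      have hcongr : cnt L (fun q => p < q ∧ Odd q) = cnt L (fun q => p + 1 ≤ q ∧ Odd q) :=
        cnt_congr (fun q _ => by constructor <;> rintro ⟨h', hx⟩ <;> exact ⟨by omega, hx⟩)
      have hge := cnt_ge (L := L) (i := p + 1) (by omega) (fun q => Odd q)
      have he1 := cnt_even p
      have he2 := cnt_odd L
      have he3 := cnt_odd (p + 1)
      obtain ⟨a, ha⟩ := hpe
      omega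
    · rw [φforbidSS, fsat_fimpl]
      intro hSp
      have hSp' : shdw ∈ w.getD p ∅ := by
        have h' : shdw ∈ w.getD (Function.update ρ .x p .x) ∅ := hSp
        simpa using h'
      have hpo : Odd p := (shadowy_shdw hs hp).1 hSp'
      rw [fsat_half]
      have hc : cnt L (fun q => FSat w (Function.update (Function.update ρ .x p) .y q)
            (fdisj (.conj (fdisj (.lt .y .x) (.eq .x .y)) (.atom shdw .y))
                   (.conj (.lt .x .y) (.atom wht .y))))
          = cnt L (fun q => (q < p + 1 ∧ Odd q) ∨ (p + 1 ≤ q ∧ Even q)) := by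
        apply cnt_congr
        intro q hq
        rw [fsat_fdisj]
        have e1 : FSat w (Function.update (Function.update ρ .x p) .y q)
            (.conj (fdisj (.lt .y .x) (.eq .x .y)) (.atom shdw .y)) ↔ (q < p + 1 ∧ Odd q) := by
          show (FSat w (Function.update (Function.update ρ .x p) .y q)
              (fdisj (.lt .y .x) (.eq .x .y))
              ∧ shdw ∈ w.getD (Function.update (Function.update ρ .x p) .y q .y) ∅) ↔ _
          rw [fsat_fdisj]
          show ((Function.update (Function.update ρ .x p) .y q .y
              < Function.update (Function.update ρ .x p) .y q .x
              ∨ Function.update (Function.update ρ .x p) .y q .x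
              = Function.update (Function.update ρ .x p) .y q .y) ∧ _) ↔ _
          simp only [update_self, update_yx]
          rw [shadowy_shdw hs hq]
          constructor
          · rintro ⟨h', hx⟩; exact ⟨by omega, hx⟩
          · rintro ⟨h', hx⟩; exact ⟨by omega, hx⟩
        have e2 : FSat w (Function.update (Function.update ρ .x p) .y q)
            (.conj (.lt .x .y) (.atom wht .y)) ↔ (p + 1 ≤ q ∧ Even q) := by
          show (Function.update (Function.update ρ .x p) .y q .x
              < Function.update (Function.update ρ .x p) .y q .y
              ∧ wht ∈ w.getD (Function.update (Function.update ρ .x p) .y q .y) ∅) ↔ _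
          simp only [update_self, update_yx]
          rw [shadowy_wht hs hq]
          constructor
          · rintro ⟨h', hx⟩; exact ⟨by omega, hx⟩
          · rintro ⟨h', hx⟩; exact ⟨by omega, hx⟩
        rw [e1, e2]
      rw [hc]
      have hdis : ∀ q, ¬((q < p + 1 ∧ Odd q) ∧ (p + 1 ≤ q ∧ Even q)) := by
        rintro q ⟨⟨a, _⟩, ⟨b, _⟩⟩; omega
      rw [cnt_or hdis, cnt_lt (by omega : p + 1 ≤ L) (fun q => Odd q)]
      have hge := cnt_ge (L := L) (i := p + 1) (by omega) (fun q => Even q)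
      have he1 := cnt_odd (p + 1)
      have he2 := cnt_even L
      have he3 := cnt_even (p + 1)
      obtain ⟨a, ha⟩ := hpo
      omega

/-- An LTL_F+PM formula has a shadowy model iff its translation has a model. -/
theorem translation_correct (wht shdw : ℕ) (hne : wht ≠ shdw) (φ : PMFormula) :
    (∃ w : Word, w ≠ [] ∧ Shadowy wht shdw w ∧ PMSat w 0 φ) ↔
    (∃ w : Word, w ≠ [] ∧ FSat w (fun _ => 0) (trSentence wht shdw φ)) := by
  constructor
  · rintro ⟨w, hwne, hs, hpm⟩
    have hL0 : 0 < w.length := List.length_pos_iff.mpr hwne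
    refine ⟨w, hwne, ?_, ?_⟩
    · exact psi_complete hs hwne _
    · refine ⟨0, hL0, ?_, ?_⟩
      · -- firstF
        intro hc
        obtain ⟨q, _, hlt⟩ := hc
        have h0 : (Function.update (Function.update (fun _ => 0) Var.x 0) Var.y q) Var.y
            < (Function.update (Function.update (fun _ => 0) Var.x 0) Var.y q) Var.x := hlt
        simp at h0
      · apply (tr_correct hs φ .x (Function.update (fun _ => 0) .x 0) (by simpa using hL0)).2
        simpa using hpm
  · rintro ⟨w, hwne, hF⟩
    have hψ : FSat w (fun _ => 0) (ψFOshadowy wht shdw) := hF.1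
    have hex : FSat w (fun _ => 0) (.ex .x (.conj (firstF .x) (tr wht .x φ))) := hF.2
    have hs := psi_sound hψ
    obtain ⟨p, hp, hin⟩ := hex
    have hfirst : FSat w (Function.update (fun _ => 0) .x p) (firstF .x) := hin.1
    have htr : FSat w (Function.update (fun _ => 0) .x p) (tr wht .x φ) := hin.2
    have hp0 : p = 0 := by
      by_contra hne0
      exact hfirst ⟨0, by omega, by
        show Function.update (Function.update (fun _ => 0) Var.x p) Var.y 0 Var.y
            < Function.update (Function.update (fun _ => 0) Var.x p) Var.y 0 Var.x
        simp only [update_self, update_yx]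
        omega⟩
    subst hp0
    refine ⟨w, hwne, hs, ?_⟩
    have := (tr_correct hs φ .x (Function.update (fun _ => 0) .x 0) (by simpa using hp)).1 htr
    simpa using this

end Trans19
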